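/- The Hilbert function h : ℤ_{≥0}^r → ℤ_{≥0} of the valuation filtration of a reduced curve singularity satisfies the matroid rank inequality: h(ℓ₁) + h(ℓ₂) ≥ h(min{ℓ₁, ℓ₂}) + h(max{ℓ₁, ℓ₂}) for all lattice points ℓ₁, ℓ₂ ∈ ℤ_{≥0}^r, where min and max are taken componentwise. -/
import Mathlib


open Finset

/-- Lattice points (we work in `ℤ^r`; nonnegativity is imposed via hypotheses). -/
abbrev Pt (r : ℕ) := Fin r → ℤ

/-- The `i`-th standard basis vector. -/
def E {r : ℕ} (i : Fin r) : Pt r := Pi.single i 1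

/-- `e_K = ∑_{i ∈ K} e_i`. -/
def eK {r : ℕ} (K : Finset (Fin r)) : Pt r := ∑ i ∈ K, E i

/-- `Δ̄ᵢ(ℓ) = {s ∈ S : sᵢ = ℓᵢ, sⱼ ≥ ℓⱼ ∀ j ≠ i}`. -/
def DeltaBarI {r : ℕ} (S : Set (Pt r)) (ℓ : Pt r) (i : Fin r) : Set (Pt r) :=
  {s | s ∈ S ∧ s i = ℓ i ∧ ∀ j, j ≠ i → ℓ j ≤ s j}

/-- `Δᵢ(ℓ) = {s ∈ S : sᵢ = ℓᵢ, sⱼ > ℓⱼ ∀ j ≠ i}`. -/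
def DeltaI {r : ℕ} (S : Set (Pt r)) (ℓ : Pt r) (i : Fin r) : Set (Pt r) :=
  {s | s ∈ S ∧ s i = ℓ i ∧ ∀ j, j ≠ i → ℓ j < s j}

/-- `Δ(ℓ) = ∪ᵢ Δᵢ(ℓ)`. -/
def Delta {r : ℕ} (S : Set (Pt r)) (ℓ : Pt r) : Set (Pt r) := ⋃ i, DeltaI S ℓ i

/-- A good (local) semigroup `S ⊂ ℤ_{≥0}^r` with conductor `c`. -/
structure GoodSemigroup (r : ℕ) where
  S : Set (Pt r)
  c : Pt r
  nonneg : ∀ s ∈ S, (0 : Pt r) ≤ s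
  zero_mem : (0 : Pt r) ∈ S
  add_mem : ∀ s ∈ S, ∀ t ∈ S, s + t ∈ S
  coord_zero : ∀ s ∈ S, ∀ i, s i = 0 → s = 0
  min_mem : ∀ s ∈ S, ∀ t ∈ S, s ⊓ t ∈ S
  prop3 : ∀ s ∈ S, ∀ t ∈ S, ∀ i, s i = t i →
    ∃ u ∈ S, s ⊓ t ≤ u ∧ s i < u i ∧ ∀ j, j ≠ i → s j ≠ t j → u j = (s ⊓ t) j
  conductor_nonneg : (0 : Pt r) ≤ c
  conductor_mem : ∀ ℓ : Pt r, c ≤ ℓ → ℓ ∈ S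
  conductor_min : ∀ c' : Pt r, 0 ≤ c' → (∀ ℓ, c' ≤ ℓ → ℓ ∈ S) → c ≤ c'

/-- `h` is the (combinatorial) Hilbert function of the good semigroup `G`. -/
def IsHilbert {r : ℕ} (G : GoodSemigroup r) (h : Pt r → ℤ) : Prop :=
  h 0 = 0 ∧ ∀ ℓ : Pt r, 0 ≤ ℓ → ∀ i : Fin r,
    (h (ℓ + E i) = h ℓ + 1 ↔ (DeltaBarI G.S ℓ i).Nonempty) ∧
    (h (ℓ + E i) = h ℓ ↔ ¬ (DeltaBarI G.S ℓ i).Nonempty)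

/-- `w` is the weight function of the good semigroup `G` (i.e. `w(ℓ) = 2h(ℓ) − |ℓ|`),
characterized by `w(0) = 0` and the step property. -/
def IsWeight {r : ℕ} (G : GoodSemigroup r) (w : Pt r → ℤ) : Prop :=
  w 0 = 0 ∧ ∀ ℓ : Pt r, 0 ≤ ℓ → ∀ i : Fin r,
    (w (ℓ + E i) = w ℓ + 1 ↔ (DeltaBarI G.S ℓ i).Nonempty) ∧
    (w (ℓ + E i) = w ℓ - 1 ↔ ¬ (DeltaBarI G.S ℓ i).Nonempty)

/-- Generalized local minimum point of the weight function. -/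
def GLM {r : ℕ} (w : Pt r → ℤ) (p : Pt r) : Prop :=
  0 ≤ p ∧ ∀ i : Fin r, 1 ≤ p i → w p < w (p - E i)

/-- Local minimum point of the weight function. -/
def LocMin {r : ℕ} (w : Pt r → ℤ) (p : Pt r) : Prop :=
  GLM w p ∧ ∀ i : Fin r, w p < w (p + E i)



lemma step_mono {r : ℕ} (G : GoodSemigroup r) (h : Pt r → ℤ) (hh : IsHilbert G h)
    (m m' : Pt r) (h0 : 0 ≤ m) (h0' : 0 ≤ m') (hle : m ≤ m') (i : Fin r) (hi : m i = m' i) :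
    h (m' + E i) - h m' ≤ h (m + E i) - h m := by
  obtain ⟨-, hstep⟩ := hh
  obtain ⟨h1, h2⟩ := hstep m h0 i
  obtain ⟨h1', h2'⟩ := hstep m' h0' i
  by_cases hne : (DeltaBarI G.S m' i).Nonempty
  · have hne2 : (DeltaBarI G.S m i).Nonempty := by
      obtain ⟨s, hs, hsi, hsj⟩ := hne
      exact ⟨s, hs, hsi.trans hi.symm, fun j hj => (hle j).trans (hsj j hj)⟩
    rw [h1'.2 hne, h1.2 hne2]
    linarith
  · rw [h2'.2 hne]
    by_cases hne2 : (DeltaBarI G.S m i).Nonempty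
    · rw [h1.2 hne2]; linarith
    · rw [h2.2 hne2]
      linarith

lemma key {r : ℕ} (G : GoodSemigroup r) (h : Pt r → ℤ) (hh : IsHilbert G h) :
    ∀ n : ℕ, ∀ ℓ ℓ' d : Pt r, 0 ≤ ℓ → 0 ≤ ℓ' → ℓ ≤ ℓ' → 0 ≤ d →
      (∀ i, 0 < d i → ℓ i = ℓ' i) → (∑ i, (d i).toNat) = n →
      h (ℓ' + d) - h ℓ' ≤ h (ℓ + d) - h ℓ := by
  intro n
  induction n with
  | zero =>
    intro ℓ ℓ' d _ _ _ hd0 _ hsum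
    have hd : d = 0 := by
      funext i
      have h1 : (d i).toNat = 0 := Finset.sum_eq_zero_iff.mp hsum i (Finset.mem_univ i)
      have h2 : (0 : ℤ) ≤ d i := hd0 i
      show d i = 0
      omega
    simp [hd]
  | succ n ih =>
    intro ℓ ℓ' d h0 h0' hle hd0 hcoord hsum
    have hex : ∃ i, 0 < d i := by
      by_contra hc
      push_neg at hc
      have hz : ∀ i ∈ Finset.univ, (d i).toNat = 0 := fun i _ => by
        have := hc i; omega
      rw [Finset.sum_eq_zero hz] at hsum
      omega
    obtain ⟨i, hi⟩ := hex
    set d' : Pt r := d - E i with hd'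
    have hd'i : d' i = d i - 1 := by
      show d i - E i i = d i - 1
      rw [E, Pi.single_eq_same]
    have hd'ne : ∀ j, j ≠ i → d' j = d j := by
      intro j hj
      show d j - E i j = d j
      rw [E, Pi.single_eq_of_ne hj]
      ring
    have hd'0 : 0 ≤ d' := by
      intro j
      show (0 : ℤ) ≤ d' j
      by_cases hji : j = i
      · subst hji; rw [hd'i]; omega
      · rw [hd'ne j hji]; exact hd0 j
    have hsum' : (∑ j, (d' j).toNat) = n := by
      rw [← Finset.add_sum_erase _ _ (Finset.mem_univ i)] at hsum ⊢
      have h1 : (d' i).toNat = (d i).toNat - 1 := by rw [hd'i]; omega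
      have h2 : ∀ j ∈ Finset.univ.erase i, (d' j).toNat = (d j).toNat := fun j hj => by
        rw [hd'ne j (Finset.ne_of_mem_erase hj)]
      rw [h1, Finset.sum_congr rfl h2]
      omega
    have hcoord' : ∀ j, 0 < d' j → ℓ j = ℓ' j := by
      intro j hj
      apply hcoord j
      by_cases hji : j = i
      · subst hji; exact hi
      · rw [hd'ne j hji] at hj; exact hj
    have hrec := ih ℓ ℓ' d' h0 h0' hle hd'0 hcoord' hsum'
    have hdsplit : d = d' + E i := by funext j; simp [hd']
    have heq1 : ℓ + d = (ℓ + d') + E i := by rw [hdsplit]; ring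
    have heq2 : ℓ' + d = (ℓ' + d') + E i := by rw [hdsplit]; ring
    have ha : (0 : Pt r) ≤ ℓ + d' := by
      intro j
      have a : (0:ℤ) ≤ ℓ j := h0 j
      have b : (0:ℤ) ≤ d' j := hd'0 j
      show (0:ℤ) ≤ ℓ j + d' j
      omega
    have hb : (0 : Pt r) ≤ ℓ' + d' := by
      intro j
      have a : (0:ℤ) ≤ ℓ' j := h0' j
      have b : (0:ℤ) ≤ d' j := hd'0 j
      show (0:ℤ) ≤ ℓ' j + d' j
      omega
    have hc : ℓ + d' ≤ ℓ' + d' := by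
      intro j
      have a : ℓ j ≤ ℓ' j := hle j
      show ℓ j + d' j ≤ ℓ' j + d' j
      omega
    have hieq : (ℓ + d') i = (ℓ' + d') i := by
      show ℓ i + d' i = ℓ' i + d' i
      rw [hcoord i hi]
    have hstep := step_mono G h hh (ℓ + d') (ℓ' + d') ha hb hc i hieq
    rw [heq1, heq2]
    linarith

/-- the Hilbert function satisfies the matroid rank inequality. -/
theorem stmt2 {r : ℕ} (G : GoodSemigroup r) (h : Pt r → ℤ) (hh : IsHilbert G h) :
    ∀ ℓ₁ ℓ₂ : Pt r, 0 ≤ ℓ₁ → 0 ≤ ℓ₂ →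
      h (ℓ₁ ⊓ ℓ₂) + h (ℓ₁ ⊔ ℓ₂) ≤ h ℓ₁ + h ℓ₂ := by
  intro ℓ₁ ℓ₂ h1 h2
  set d : Pt r := ℓ₂ - ℓ₁ ⊓ ℓ₂ with hd
  have hdi : ∀ i, d i = ℓ₂ i - min (ℓ₁ i) (ℓ₂ i) := fun i => rfl
  have hmin : ∀ i, (ℓ₁ ⊓ ℓ₂) i = min (ℓ₁ i) (ℓ₂ i) := fun i => rfl
  have hmax : ∀ i, (ℓ₁ ⊔ ℓ₂) i = max (ℓ₁ i) (ℓ₂ i) := fun i => rfl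
  have h0min : 0 ≤ ℓ₁ ⊓ ℓ₂ := le_inf h1 h2
  have hlemin : ℓ₁ ⊓ ℓ₂ ≤ ℓ₁ := inf_le_left
  have hd0 : 0 ≤ d := by
    intro i
    show (0:ℤ) ≤ d i
    rw [hdi i]
    have := min_le_right (ℓ₁ i) (ℓ₂ i)
    linarith
  have hcoord : ∀ i, 0 < d i → (ℓ₁ ⊓ ℓ₂) i = ℓ₁ i := by
    intro i hdipos
    rw [hdi i] at hdipos
    rw [hmin i]
    rcases min_cases (ℓ₁ i) (ℓ₂ i) with ⟨he, _⟩ | ⟨he, _⟩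
    · exact he
    · rw [he] at hdipos; linarith
  have hkey := key G h hh (∑ i, (d i).toNat) (ℓ₁ ⊓ ℓ₂) ℓ₁ d h0min h1 hlemin hd0 hcoord rfl
  have e1 : ℓ₁ ⊓ ℓ₂ + d = ℓ₂ := by
    funext i
    show (ℓ₁ ⊓ ℓ₂) i + d i = ℓ₂ i
    rw [hdi i, hmin i]
    ring
  have e2 : ℓ₁ + d = ℓ₁ ⊔ ℓ₂ := by
    funext i
    show ℓ₁ i + d i = (ℓ₁ ⊔ ℓ₂) i
    rw [hdi i, hmax i]
    have := min_add_max (ℓ₁ i) (ℓ₂ i)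
    linarith
  rw [e1, e2] at hkey
  linarith
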